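/- For rooted binary trees T_a, T_b on k labeled tips, if for every pair of tips i,j the number of edges from the root to the most recent common ancestor of i and j is the same in T_a as in T_b, then T_a and T_b have the same topology (i.e., they induce the same set of tip partitions by internal edges). -/

import Mathlib

/-- Rooted binary trees with tips labeled by `Fin k`; each internal node
stores the branch lengths of the edges to its two children. -/
inductive RTree (k : ℕ) : Type
  | leaf : Fin k → RTree k
  | node : ℝ → RTree k → ℝ → RTree k → RTree k

namespace RTree

variable {k : ℕ}

/-- The list of tip labels of a tree. -/
def tipList : RTree k → List (Fin k)
  | leaf i => [i]
  | node _ l _ r => l.tipList ++ r.tipList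

/-- The set of tip labels of a tree. -/
def tips (T : RTree k) : Finset (Fin k) := T.tipList.toFinset

/-- `T` is a phylogenetic tree on `k` labeled tips: each label occurs exactly once. -/
def IsPhylo (T : RTree k) : Prop := T.tipList.Nodup ∧ ∀ i : Fin k, i ∈ T.tipList

/-- All branch lengths are positive. -/
def PosLens : RTree k → Prop
  | leaf _ => True
  | node a l b r => 0 < a ∧ 0 < b ∧ PosLens l ∧ PosLens r

/-- All branch lengths are nonnegative. -/
def NonnegLens : RTree k → Prop
  | leaf _ => True
  | node a l b r => 0 ≤ a ∧ 0 ≤ b ∧ NonnegLens l ∧ NonnegLens r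

/-- All branch lengths are at most `ε`. -/
def LensLE (ε : ℝ) : RTree k → Prop
  | leaf _ => True
  | node a l b r => a ≤ ε ∧ b ≤ ε ∧ LensLE ε l ∧ LensLE ε r

/-- All branch lengths are equal to `1`. -/
def UnitLens : RTree k → Prop
  | leaf _ => True
  | node a l b r => a = 1 ∧ b = 1 ∧ UnitLens l ∧ UnitLens r

/-- `m T i j`: the number of edges on the path from the root to the
most recent common ancestor of tips `i` and `j`. -/
def m : RTree k → Fin k → Fin k → ℕ
  | leaf _, _, _ => 0
  | node _ l _ r, i, j =>
      if i ∈ l.tips ∧ j ∈ l.tips then m l i j + 1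
      else if i ∈ r.tips ∧ j ∈ r.tips then m r i j + 1
      else 0

/-- `Mlen T i j`: the sum of branch lengths on the path from the root to the
most recent common ancestor of tips `i` and `j`. -/
def Mlen : RTree k → Fin k → Fin k → ℝ
  | leaf _, _, _ => 0
  | node a l b r, i, j =>
      if i ∈ l.tips ∧ j ∈ l.tips then Mlen l i j + a
      else if i ∈ r.tips ∧ j ∈ r.tips then Mlen r i j + b
      else 0

/-- Whether the tree is a single leaf. -/
def isLeaf : RTree k → Bool
  | leaf _ => true
  | node _ _ _ _ => false

/-- `pend T i`: the length of the pendant edge leading to tip `i`. -/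
def pend : RTree k → Fin k → ℝ
  | leaf _, _ => 0
  | node a l b r, i =>
      if i ∈ l.tips then (if l.isLeaf then a else pend l i)
      else if i ∈ r.tips then (if r.isLeaf then b else pend r i)
      else 0

/-- The set of clades (tip sets of rooted subtrees) of a tree.  Two rooted
trees have the same topology iff they have the same set of clades, i.e. their
internal edges induce the same tip partitions. -/
def clades : RTree k → Set (Finset (Fin k))
  | leaf i => {{i}}
  | node a l b r => insert (node a l b r).tips (clades l ∪ clades r)

/-- Equality of rooted trees: same topology (ignoring the left/right order of
children) and equal corresponding branch lengths. -/
inductive TreeEq : RTree k → RTree k → Prop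
  | leaf (i : Fin k) : TreeEq (.leaf i) (.leaf i)
  | node {l l' r r' : RTree k} (a b : ℝ) :
      TreeEq l l' → TreeEq r r' → TreeEq (.node a l b r) (.node a l' b r')
  | swap {l l' r r' : RTree k} (a b : ℝ) :
      TreeEq l l' → TreeEq r r' → TreeEq (.node a l b r) (.node b r' a l')

/-- `S` is the rooted subtree of `T` hanging at a node at edge-depth `d`. -/
inductive SubtreeAt : RTree k → ℕ → RTree k → Prop
  | refl (T : RTree k) : SubtreeAt T 0 T
  | left {l S : RTree k} {d : ℕ} (a b : ℝ) (r : RTree k) :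
      SubtreeAt l d S → SubtreeAt (.node a l b r) (d + 1) S
  | right {r S : RTree k} {d : ℕ} (a b : ℝ) (l : RTree k) :
      SubtreeAt r d S → SubtreeAt (.node a l b r) (d + 1) S

/-- Relabel the tips of a tree by a permutation. -/
def relabel (σ : Equiv.Perm (Fin k)) : RTree k → RTree k
  | leaf i => leaf (σ i)
  | node a l b r => node a (relabel σ l) b (relabel σ r)

/-- The set of unordered pairs of distinct tips, represented by ordered pairs `(i, j)` with `i < j`. -/
def tipPairs (k : ℕ) : Finset (Fin k × Fin k) :=
  Finset.univ.filter (fun p => p.1 < p.2)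

/-- The `λ`-entry of the tree vector `v_λ(T)` at the pair `(i, j)`:
`(1 − λ) m_{i,j} + λ M_{i,j}`. -/
noncomputable def vPair (lam : ℝ) (T : RTree k) (i j : Fin k) : ℝ :=
  (1 - lam) * (T.m i j : ℝ) + lam * T.Mlen i j

/-- The `λ`-entry of the tree vector `v_λ(T)` at tip `i`: `(1 − λ) · 1 + λ p_i`. -/
noncomputable def vTip (lam : ℝ) (T : RTree k) (i : Fin k) : ℝ :=
  (1 - lam) * 1 + lam * T.pend i

/-- The metric `d_λ(T_a, T_b) = ‖v_λ(T_a) − v_λ(T_b)‖₂`. -/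
noncomputable def treeDist (lam : ℝ) (Ta Tb : RTree k) : ℝ :=
  Real.sqrt
    ((∑ p ∈ tipPairs k, (vPair lam Ta p.1 p.2 - vPair lam Tb p.1 p.2) ^ 2) +
      ∑ i : Fin k, (vTip lam Ta i - vTip lam Tb i) ^ 2)

/-- `‖m(T_a) − m(T_b)‖₂`, the Euclidean distance between the topology vectors
(the final `k` entries of `m` are all `1` and contribute nothing). -/
noncomputable def mDist (Ta Tb : RTree k) : ℝ :=
  Real.sqrt (∑ p ∈ tipPairs k, ((Ta.m p.1 p.2 : ℝ) - (Tb.m p.1 p.2 : ℝ)) ^ 2)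

/-- `‖M(T_a) − M(T_b)‖₂`, the Euclidean distance between the
branch-length vectors (root-to-MRCA path lengths and pendant lengths). -/
noncomputable def MDist (Ta Tb : RTree k) : ℝ :=
  Real.sqrt
    ((∑ p ∈ tipPairs k, (Ta.Mlen p.1 p.2 - Tb.Mlen p.1 p.2) ^ 2) +
      ∑ i : Fin k, (Ta.pend i - Tb.pend i) ^ 2)

/-- `D_λ(T_a,T_b) = (1−λ)‖m(T_a)−m(T_b)‖₂ + λ‖M(T_a)−M(T_b)‖₂`. -/
noncomputable def DDist (lam : ℝ) (Ta Tb : RTree k) : ℝ :=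
  (1 - lam) * mDist Ta Tb + lam * MDist Ta Tb

end RTree

namespace RTree

variable {k : ℕ}

lemma mem_tips {T : RTree k} {i : Fin k} : i ∈ T.tips ↔ i ∈ T.tipList :=
  List.mem_toFinset

lemma tips_node (a b : ℝ) (l r : RTree k) :
    (node a l b r).tips = l.tips ∪ r.tips := by
  simp [tips, tipList]

lemma tips_nonempty (T : RTree k) : T.tips.Nonempty := by
  induction T with
  | leaf i => exact ⟨i, by simp [tips, tipList]⟩
  | node a l b r ihl ihr =>
    obtain ⟨i, hi⟩ := ihl
    exact ⟨i, by rw [tips_node]; exact Finset.mem_union_left _ hi⟩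

lemma nodup_node {a b : ℝ} {l r : RTree k}
    (h : (node a l b r).tipList.Nodup) :
    l.tipList.Nodup ∧ r.tipList.Nodup ∧ Disjoint l.tips r.tips := by
  rw [show (node a l b r).tipList = l.tipList ++ r.tipList from rfl,
    List.nodup_append] at h
  refine ⟨h.1, h.2.1, Finset.disjoint_left.2 ?_⟩
  intro x hx hx'
  exact h.2.2 x (mem_tips.1 hx) x (mem_tips.1 hx') rfl

lemma m_node (a b : ℝ) (l r : RTree k) (i j : Fin k) :
    m (node a l b r) i j =
      if i ∈ l.tips ∧ j ∈ l.tips then m l i j + 1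
      else if i ∈ r.tips ∧ j ∈ r.tips then m r i j + 1
      else 0 := rfl

lemma m_node_ne_zero {a b : ℝ} {l r : RTree k} {i j : Fin k} :
    m (node a l b r) i j ≠ 0 ↔
      (i ∈ l.tips ∧ j ∈ l.tips) ∨ (i ∈ r.tips ∧ j ∈ r.tips) := by
  rw [m_node]
  by_cases h1 : i ∈ l.tips ∧ j ∈ l.tips
  · simp [h1]
  · by_cases h2 : i ∈ r.tips ∧ j ∈ r.tips
    · simp [h1, h2]
    · simp [h1, h2]

/-- If a two-block partition agrees with another and the blocks share a point,
the blocks coincide. -/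
lemma two_block_aux {L R L' R' : Finset (Fin k)}
    (hd : Disjoint L R) (hd' : Disjoint L' R') (hU : L ∪ R = L' ∪ R')
    (hrel : ∀ i ∈ L ∪ R, ∀ j ∈ L ∪ R,
      ((i ∈ L ∧ j ∈ L) ∨ (i ∈ R ∧ j ∈ R)) ↔
        ((i ∈ L' ∧ j ∈ L') ∨ (i ∈ R' ∧ j ∈ R')))
    {i₀ : Fin k} (h0 : i₀ ∈ L) (h0' : i₀ ∈ L') :
    L = L' ∧ R = R' := by
  have hiU : i₀ ∈ L ∪ R := Finset.mem_union_left _ h0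
  have hLL : L = L' := by
    ext j
    constructor
    · intro hj
      have hjU : j ∈ L ∪ R := Finset.mem_union_left _ hj
      have := (hrel i₀ hiU j hjU).1 (Or.inl ⟨h0, hj⟩)
      rcases this with ⟨_, hj'⟩ | ⟨hi', _⟩
      · exact hj'
      · exact absurd hi' (Finset.disjoint_left.1 hd' h0')
    · intro hj
      have hjU : j ∈ L ∪ R := by
        rw [hU]; exact Finset.mem_union_left _ hj
      have := (hrel i₀ hiU j hjU).2 (Or.inl ⟨h0', hj⟩)
      rcases this with ⟨_, hj'⟩ | ⟨hi', _⟩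
      · exact hj'
      · exact absurd hi' (Finset.disjoint_left.1 hd h0)
  refine ⟨hLL, ?_⟩
  ext j
  constructor
  · intro hj
    have hjU : j ∈ L' ∪ R' := by rw [← hU]; exact Finset.mem_union_right _ hj
    rcases Finset.mem_union.1 hjU with hj' | hj'
    · exact absurd (hLL ▸ hj') (Finset.disjoint_right.1 hd hj)
    · exact hj'
  · intro hj
    have hjU : j ∈ L ∪ R := by rw [hU]; exact Finset.mem_union_right _ hj
    rcases Finset.mem_union.1 hjU with hj' | hj'
    · exact absurd (hLL ▸ hj') (Finset.disjoint_right.1 hd' hj)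
    · exact hj'

lemma clades_eq_of_m (Ta : RTree k) : ∀ Tb : RTree k,
    Ta.tipList.Nodup → Tb.tipList.Nodup → Ta.tips = Tb.tips →
    (∀ i ∈ Ta.tips, ∀ j ∈ Ta.tips, Ta.m i j = Tb.m i j) →
    Ta.clades = Tb.clades := by
  induction Ta with
  | leaf i =>
    intro Tb _ hnb htips _
    cases Tb with
    | leaf j =>
      have : i = j := by
        have := htips ▸ (show i ∈ (leaf i : RTree k).tips by simp [tips, tipList])
        simpa [tips, tipList] using this
      subst this; rfl
    | node a' l' b' r' =>
      exfalso
      obtain ⟨_, _, hdisj⟩ := nodup_node hnb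
      obtain ⟨x, hx⟩ := tips_nonempty l'
      obtain ⟨y, hy⟩ := tips_nonempty r'
      have hx' : x ∈ (leaf i : RTree k).tips := by
        rw [htips, tips_node]; exact Finset.mem_union_left _ hx
      have hy' : y ∈ (leaf i : RTree k).tips := by
        rw [htips, tips_node]; exact Finset.mem_union_right _ hy
      simp only [tips, tipList, List.toFinset_cons, List.toFinset_nil,
        LawfulSingleton.insert_empty_eq, Finset.mem_singleton] at hx' hy'
      subst hx'; subst hy'
      exact Finset.disjoint_left.1 hdisj hx hy
  | node a l b r ihl ihr =>
    intro Tb hna hnb htips hm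
    cases Tb with
    | leaf j =>
      exfalso
      obtain ⟨_, _, hdisj⟩ := nodup_node hna
      obtain ⟨x, hx⟩ := tips_nonempty l
      obtain ⟨y, hy⟩ := tips_nonempty r
      have hx' : x ∈ (leaf j : RTree k).tips := by
        rw [← htips, tips_node]; exact Finset.mem_union_left _ hx
      have hy' : y ∈ (leaf j : RTree k).tips := by
        rw [← htips, tips_node]; exact Finset.mem_union_right _ hy
      simp only [tips, tipList, List.toFinset_cons, List.toFinset_nil,
        LawfulSingleton.insert_empty_eq, Finset.mem_singleton] at hx' hy'
      subst hx'; subst hy'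
      exact Finset.disjoint_left.1 hdisj hx hy
    | node a' l' b' r' =>
      obtain ⟨hnl, hnr, hdisj⟩ := nodup_node hna
      obtain ⟨hnl', hnr', hdisj'⟩ := nodup_node hnb
      have hU : l.tips ∪ r.tips = l'.tips ∪ r'.tips := by
        rw [← tips_node a b, ← tips_node a' b', htips]
      have hrel : ∀ i ∈ l.tips ∪ r.tips, ∀ j ∈ l.tips ∪ r.tips,
          ((i ∈ l.tips ∧ j ∈ l.tips) ∨ (i ∈ r.tips ∧ j ∈ r.tips)) ↔
            ((i ∈ l'.tips ∧ j ∈ l'.tips) ∨ (i ∈ r'.tips ∧ j ∈ r'.tips)) := by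
        intro i hi j hj
        rw [← m_node_ne_zero (a := a) (b := b), ← m_node_ne_zero (a := a') (b := b')]
        rw [hm i (by rw [tips_node]; exact hi) j (by rw [tips_node]; exact hj)]
      -- m agreement transfers to subtrees
      have hmL : ∀ (s s' : RTree k) (c d c' d' : ℝ), s.tips = s'.tips →
          (∀ i ∈ s.tips, ∀ j ∈ s.tips,
            m (node c s d r) i j = m (node c' s' d' r') i j) →
          ∀ i ∈ s.tips, ∀ j ∈ s.tips, s.m i j = s'.m i j := by
        intro s s' c d c' d' hts hmm i hi j hj
        have := hmm i hi j hj
        rw [m_node, m_node, if_pos ⟨hi, hj⟩, if_pos ⟨hts ▸ hi, hts ▸ hj⟩] at this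
        omega
      obtain ⟨x, hx⟩ := tips_nonempty l
      have hxU : x ∈ l'.tips ∪ r'.tips := by
        rw [← hU]; exact Finset.mem_union_left _ hx
      rcases Finset.mem_union.1 hxU with hx' | hx'
      · -- l matches l', r matches r'
        obtain ⟨hLe, hRe⟩ := two_block_aux hdisj hdisj' hU hrel hx hx'
        have hcl : l.clades = l'.clades := by
          refine ihl l' hnl hnl' hLe ?_
          intro i hi j hj
          refine hmL l l' a b a' b' hLe ?_ i hi j hj
          intro i' hi' j' hj'
          exact hm i' (by rw [tips_node]; exact Finset.mem_union_left _ hi')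
            j' (by rw [tips_node]; exact Finset.mem_union_left _ hj')
        have hcr : r.clades = r'.clades := by
          refine ihr r' hnr hnr' hRe ?_
          intro i hi j hj
          have := hm i (by rw [tips_node]; exact Finset.mem_union_right _ hi)
            j (by rw [tips_node]; exact Finset.mem_union_right _ hj)
          rw [m_node, m_node] at this
          have hil : i ∉ l.tips := Finset.disjoint_right.1 hdisj hi
          have hil' : i ∉ l'.tips := Finset.disjoint_right.1 hdisj' (hRe ▸ hi)
          rw [if_neg (fun h => hil h.1), if_pos ⟨hi, hj⟩,
            if_neg (fun h => hil' h.1), if_pos ⟨hRe ▸ hi, hRe ▸ hj⟩] at this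
          omega
        show insert _ (l.clades ∪ r.clades) = insert _ (l'.clades ∪ r'.clades)
        rw [hcl, hcr, htips]
      · -- l matches r', r matches l'
        have hrel' : ∀ i ∈ l.tips ∪ r.tips, ∀ j ∈ l.tips ∪ r.tips,
            ((i ∈ l.tips ∧ j ∈ l.tips) ∨ (i ∈ r.tips ∧ j ∈ r.tips)) ↔
              ((i ∈ r'.tips ∧ j ∈ r'.tips) ∨ (i ∈ l'.tips ∧ j ∈ l'.tips)) := by
          intro i hi j hj
          rw [hrel i hi j hj]; exact or_comm
        obtain ⟨hLe, hRe⟩ := two_block_aux hdisj hdisj'.symm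
          (by rw [hU, Finset.union_comm]) hrel' hx hx'
        have hcl : l.clades = r'.clades := by
          refine ihl r' hnl hnr' hLe ?_
          intro i hi j hj
          have := hm i (by rw [tips_node]; exact Finset.mem_union_left _ hi)
            j (by rw [tips_node]; exact Finset.mem_union_left _ hj)
          rw [m_node, m_node] at this
          have hil' : i ∉ l'.tips := Finset.disjoint_right.1 hdisj' (hLe ▸ hi)
          rw [if_pos ⟨hi, hj⟩, if_neg (fun h => hil' h.1),
            if_pos ⟨hLe ▸ hi, hLe ▸ hj⟩] at this
          omega
        have hcr : r.clades = l'.clades := by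
          refine ihr l' hnr hnl' hRe ?_
          intro i hi j hj
          have := hm i (by rw [tips_node]; exact Finset.mem_union_right _ hi)
            j (by rw [tips_node]; exact Finset.mem_union_right _ hj)
          rw [m_node, m_node] at this
          have hil : i ∉ l.tips := Finset.disjoint_right.1 hdisj hi
          rw [if_neg (fun h => hil h.1), if_pos ⟨hi, hj⟩,
            if_pos ⟨hRe ▸ hi, hRe ▸ hj⟩] at this
          omega
        show insert _ (l.clades ∪ r.clades) = insert _ (l'.clades ∪ r'.clades)
        rw [hcl, hcr, htips, Set.union_comm]

end RTree
open RTree in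
/-- if all root-to-MRCA edge counts agree, the trees have the
same topology (same set of tip partitions induced by internal edges). -/
theorem same_m_implies_same_topology {k : ℕ} (Ta Tb : RTree k)
    (ha : Ta.IsPhylo) (hb : Tb.IsPhylo)
    (hm : ∀ i j : Fin k, Ta.m i j = Tb.m i j) :
    Ta.clades = Tb.clades := by
  refine clades_eq_of_m Ta Tb ha.1 hb.1 ?_ (fun i _ j _ => hm i j)
  ext x
  simp only [mem_tips]
  exact ⟨fun _ => hb.2 x, fun _ => ha.2 x⟩
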